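/- For classical modal logic K over finitely branching crisp frames, a formula φ over {0,∧,∨,→,□,◇} is K-valid if and only if the G²± formula 1 ⊰ φ^∂ is v₂-valid over finitely branching frames (i.e., v₂(1 ⊰ φ^∂, w) = 0 in every model and state). -/

import Mathlib

open unitInterval

instance : Fact ((0:ℝ) ≤ 1) := ⟨zero_le_one⟩

/-- Gödel implication on [0,1]. -/
noncomputable def gimp (a b : I) : I := if a ≤ b then 1 else b

/-- Gödel coimplication on [0,1]. -/
noncomputable def gcoimp (a b : I) : I := if a ≤ b then 0 else a

/-- The language of G²± with ¬, ∧, →, ■, ◆. -/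
inductive Fm : Type
  | var : ℕ → Fm
  | neg : Fm → Fm
  | and : Fm → Fm → Fm
  | imp : Fm → Fm → Fm
  | box : Fm → Fm
  | dia : Fm → Fm

/-- A bi-relational G²± model. -/
structure Mdl where
  W : Type
  Rp : W → W → I
  Rm : W → W → I
  v1 : ℕ → W → I
  v2 : ℕ → W → I

/-- The pair (positive support, negative support) of a formula at a state. -/
noncomputable def Mdl.val (M : Mdl) : Fm → M.W → I × I
  | .var n, w => (M.v1 n w, M.v2 n w)
  | .neg φ, w => ((M.val φ w).2, (M.val φ w).1)
  | .and φ ψ, w => ((M.val φ w).1 ⊓ (M.val ψ w).1, (M.val φ w).2 ⊔ (M.val ψ w).2)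
  | .imp φ ψ, w => (gimp (M.val φ w).1 (M.val ψ w).1, gcoimp (M.val ψ w).2 (M.val φ w).2)
  | .box φ, w => (⨅ w', gimp (M.Rp w w') (M.val φ w').1, ⨅ w', gimp (M.Rm w w') (M.val φ w').2)
  | .dia φ, w => (⨆ w', (M.Rp w w') ⊓ (M.val φ w').1, ⨆ w', (M.Rm w w') ⊓ (M.val φ w').2)

noncomputable def Mdl.val1 (M : Mdl) (φ : Fm) (w : M.W) : I := (M.val φ w).1
noncomputable def Mdl.val2 (M : Mdl) (φ : Fm) (w : M.W) : I := (M.val φ w).2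

/-- Classical modal formulas over {0, ∧, ∨, →, □, ◇}. -/
inductive CFm : Type
  | bot : CFm
  | var : ℕ → CFm
  | and : CFm → CFm → CFm
  | or : CFm → CFm → CFm
  | imp : CFm → CFm → CFm
  | box : CFm → CFm
  | dia : CFm → CFm

/-- Classical Kripke semantics. -/
def csat {W : Type} (R : W → W → Prop) (V : ℕ → W → Prop) : CFm → W → Prop
  | .bot, _ => False
  | .var n, w => V n w
  | .and φ ψ, w => csat R V φ w ∧ csat R V ψ w
  | .or φ ψ, w => csat R V φ w ∨ csat R V ψ w
  | .imp φ ψ, w => csat R V φ w → csat R V ψ w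
  | .box φ, w => ∀ w', R w w' → csat R V φ w'
  | .dia φ, w => ∃ w', R w w' ∧ csat R V φ w'

/-- A G²± formula with constant value (1,0): the constant 1. -/
def fmTop : Fm := .imp (.var 0) (.var 0)

/-- Coimplication in the G²± language: φ ⊰ ψ := ¬(¬ψ → ¬φ). -/
def fmCoimp (φ ψ : Fm) : Fm := .neg (.imp (.neg ψ) (.neg φ))

/-- Disjunction in the G²± language: φ ∨ ψ := ¬(¬φ ∧ ¬ψ). -/
def fmOr (φ ψ : Fm) : Fm := .neg (.and (.neg φ) (.neg ψ))

/-- The dual translation φ^∂. -/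
def CFm.dual : CFm → Fm
  | .bot => fmTop
  | .var n => fmCoimp fmTop (fmCoimp fmTop (.var n))
  | .and φ ψ => fmOr φ.dual ψ.dual
  | .or φ ψ => .and φ.dual ψ.dual
  | .imp φ ψ => fmCoimp ψ.dual φ.dual
  | .box φ => .box φ.dual
  | .dia φ => .dia φ.dual

/-! ### Auxiliary lemmas -/

lemma I_le_zero_iff (a : I) : a ≤ 0 ↔ a = 0 := le_zero_iff

lemma gimp_zero_left (b : I) : gimp 0 b = 1 := by
  simp [gimp, show (0:I) ≤ b from bot_le]

lemma gimp_ne_zero_iff (a b : I) : gimp a b ≠ 0 ↔ (a ≠ 0 → b ≠ 0) := by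
  unfold gimp
  split
  · rename_i h
    simp only [ne_eq, one_ne_zero, not_false_iff, true_iff]
    intro ha hb
    exact ha (le_zero_iff.mp (hb ▸ h))
  · rename_i h
    have ha : a ≠ 0 := fun h0 => h (h0 ▸ bot_le)
    tauto

lemma I_inf_eq_zero_iff (a b : I) : a ⊓ b = 0 ↔ a = 0 ∨ b = 0 := by
  constructor
  · intro h
    rcases le_total a b with h' | h'
    · left; rwa [inf_eq_left.mpr h'] at h
    · right; rwa [inf_eq_right.mpr h'] at h
  · rintro (h | h)
    · rw [h]; exact le_zero_iff.mp inf_le_left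
    · rw [h]; exact le_zero_iff.mp inf_le_right

lemma I_sup_eq_zero_iff (a b : I) : a ⊔ b = 0 ↔ a = 0 ∧ b = 0 := by
  rw [show (0:I) = ⊥ from rfl]; exact sup_eq_bot_iff

lemma I_iSup_eq_zero_iff {ι : Type} (f : ι → I) : ⨆ i, f i = 0 ↔ ∀ i, f i = 0 := by
  rw [show (0:I) = ⊥ from rfl]; exact iSup_eq_bot

lemma iInf_gimp_ne_zero {W : Type} (r : W → I) (x : W → I)
    (hfin : {w | r w ≠ 0}.Finite) :
    (⨅ w, gimp (r w) (x w)) ≠ 0 ↔ ∀ w, gimp (r w) (x w) ≠ 0 := by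
  constructor
  · intro h w hw
    exact h (le_zero_iff.mp (hw ▸ iInf_le _ w))
  · intro h
    set s : Finset I := insert 1 (hfin.toFinset.image (fun w => gimp (r w) (x w))) with hs_def
    have hs : s.Nonempty := ⟨1, Finset.mem_insert_self _ _⟩
    have hlb : ∀ w, s.min' hs ≤ gimp (r w) (x w) := by
      intro w
      by_cases hw : r w = 0
      · rw [hw, gimp_zero_left]
        exact Finset.min'_le _ _ (Finset.mem_insert_self _ _)
      · exact Finset.min'_le _ _ (Finset.mem_insert_of_mem
          (Finset.mem_image.mpr ⟨w, hfin.mem_toFinset.mpr hw, rfl⟩))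
    have hmin : s.min' hs ≠ 0 := by
      have hmem : s.min' hs ∈ insert 1 (hfin.toFinset.image (fun w => gimp (r w) (x w))) :=
        hs_def ▸ s.min'_mem hs
      rcases Finset.mem_insert.mp hmem with h1 | h2
      · rw [h1]; exact one_ne_zero
      · obtain ⟨w, _, hw⟩ := Finset.mem_image.mp h2
        rw [← hw]; exact h w
    intro h0
    exact hmin (le_zero_iff.mp (h0 ▸ le_iInf hlb))

lemma val2_fmTop (M : Mdl) (w : M.W) : M.val2 fmTop w = 0 := by
  simp [Mdl.val2, fmTop, Mdl.val, gcoimp]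

lemma val2_fmCoimp (M : Mdl) (φ ψ : Fm) (w : M.W) :
    M.val2 (fmCoimp φ ψ) w = gimp (M.val2 ψ w) (M.val2 φ w) := rfl

lemma val2_fmOr (M : Mdl) (φ ψ : Fm) (w : M.W) :
    M.val2 (fmOr φ ψ) w = M.val2 φ w ⊓ M.val2 ψ w := rfl

/-- Key lemma: positivity of `v₂(φ^∂)` matches classical satisfaction. -/
lemma dual_val2_iff (M : Mdl) (hm : ∀ w : M.W, {w' | M.Rm w w' ≠ 0}.Finite) :
    ∀ (φ : CFm) (w : M.W),
      M.val2 φ.dual w ≠ 0 ↔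
        csat (fun a b => M.Rm a b ≠ 0) (fun n a => M.v2 n a ≠ 0) φ w := by
  intro φ
  induction φ with
  | bot =>
      intro w
      simp [CFm.dual, val2_fmTop, csat]
  | var n =>
      intro w
      have hv : M.val2 (.var n) w = M.v2 n w := rfl
      simp only [CFm.dual, val2_fmCoimp, val2_fmTop, csat, hv]
      rw [gimp_ne_zero_iff]
      constructor
      · intro h
        by_contra hn
        have : gimp (M.v2 n w) 0 ≠ 0 := by
          rw [gimp_ne_zero_iff]; tauto
        exact (h this) rfl
      · intro h hg
        rw [gimp_ne_zero_iff] at hg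
        exact absurd rfl (hg h)
  | and φ ψ ihφ ihψ =>
      intro w
      simp only [CFm.dual, val2_fmOr, csat, ← ihφ w, ← ihψ w]
      rw [ne_eq, I_inf_eq_zero_iff]
      tauto
  | or φ ψ ihφ ihψ =>
      intro w
      have h : M.val2 (.and φ.dual ψ.dual) w = M.val2 φ.dual w ⊔ M.val2 ψ.dual w := rfl
      simp only [CFm.dual, csat, ← ihφ w, ← ihψ w, h]
      rw [ne_eq, I_sup_eq_zero_iff]
      tauto
  | imp φ ψ ihφ ihψ =>
      intro w
      simp only [CFm.dual, val2_fmCoimp, csat, ← ihφ w, ← ihψ w]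
      exact gimp_ne_zero_iff _ _
  | box φ ih =>
      intro w
      have h : M.val2 (.box φ.dual) w = ⨅ w', gimp (M.Rm w w') (M.val2 φ.dual w') := rfl
      simp only [CFm.dual, h, csat]
      rw [iInf_gimp_ne_zero _ _ (hm w)]
      constructor
      · intro h' w' hr
        exact (ih w').mp ((gimp_ne_zero_iff _ _).mp (h' w') hr)
      · intro h' w'
        rw [gimp_ne_zero_iff]
        intro hr
        exact (ih w').mpr (h' w' hr)
  | dia φ ih =>
      intro w
      have h : M.val2 (.dia φ.dual) w = ⨆ w', M.Rm w w' ⊓ M.val2 φ.dual w' := rfl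
      simp only [CFm.dual, h, csat]
      rw [ne_eq, I_iSup_eq_zero_iff]
      push_neg
      constructor
      · rintro ⟨w', hw'⟩
        rw [ne_eq, I_inf_eq_zero_iff] at hw'
        push_neg at hw'
        exact ⟨w', hw'.1, (ih w').mp hw'.2⟩
      · rintro ⟨w', hr, hs⟩
        refine ⟨w', ?_⟩
        rw [ne_eq, I_inf_eq_zero_iff]
        push_neg
        exact ⟨hr, (ih w').mpr hs⟩

noncomputable def indI (p : Prop) : I :=
  haveI := Classical.propDecidable p
  if p then 1 else 0

lemma indI_ne_zero (p : Prop) : indI p ≠ 0 ↔ p := by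
  unfold indI
  split <;> simp_all

theorem K_validity_iff_v2_validity_of_dual :
    ∀ φ : CFm,
      (∀ (W : Type) (R : W → W → Prop) (V : ℕ → W → Prop),
        (∀ w : W, {w' | R w w'}.Finite) → ∀ w : W, csat R V φ w) ↔
      (∀ M : Mdl,
        (∀ w : M.W, {w' | M.Rp w w' ≠ 0}.Finite) →
        (∀ w : M.W, {w' | M.Rm w w' ≠ 0}.Finite) →
        ∀ w : M.W, M.val2 (fmCoimp fmTop φ.dual) w = 0) := by
  intro φ
  constructor
  · intro hval M _ hm w
    have hx : M.val2 φ.dual w ≠ 0 :=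
      (dual_val2_iff M hm φ w).mpr (hval M.W _ _ hm w)
    rw [val2_fmCoimp, val2_fmTop, gimp, if_neg (fun hle => hx (le_zero_iff.mp hle))]
  · intro hv W R V hfin w
    set M : Mdl := ⟨W, fun a b => indI (R a b), fun a b => indI (R a b),
      fun n a => indI (V n a), fun n a => indI (V n a)⟩ with hM
    have hfinM : ∀ w : M.W, {w' | M.Rm w w' ≠ 0}.Finite := by
      intro w
      exact (hfin w).subset (fun w' h => (indI_ne_zero _).mp h)
    have h2 := hv M hfinM hfinM w
    rw [val2_fmCoimp, val2_fmTop] at h2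
    have hx : M.val2 φ.dual w ≠ 0 := by
      intro h0
      rw [h0, gimp_zero_left] at h2
      exact one_ne_zero h2
    have hc := (dual_val2_iff M hfinM φ w).mp hx
    have hR : (fun a b : M.W => M.Rm a b ≠ 0) = R :=
      funext fun a => funext fun b => propext (indI_ne_zero _)
    have hV : (fun n (a : M.W) => M.v2 n a ≠ 0) = V :=
      funext fun n => funext fun a => propext (indI_ne_zero _)
    rw [hR, hV] at hc
    exact hc
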